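/- Let v > 0, μ ∈ (0,1), σ > 1, and let w̄, λ̄, Ȳ, Ḡ be positive real constants. Define Γ(Z) := −vμḠ^{−μ}·( w̄Z/(1−σ) + ((Ȳ/λ̄)Z² − w̄Z)/(σ − μZ) ) and Z* := (w̄ + w̄σ/(σ−1)) / (μw̄/(σ−1) + Ȳ/λ̄). Then Z* > 0, and for every Z ∈ (0, 1) (for which σ − μZ > 0 automatically holds): Γ(Z) > 0 if and only if Z < Z*, and Γ(Z) < 0 if and only if Z > Z*. -/

import Mathlib

open Real

theorem eigenvalue_sign_threshold (v μ σ wbar lbar Ybar Gbar : ℝ)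
    (hv : 0 < v) (hμ : μ ∈ Set.Ioo (0 : ℝ) 1) (hσ : 1 < σ)
    (hw : 0 < wbar) (hl : 0 < lbar) (hY : 0 < Ybar) (hG : 0 < Gbar) :
    0 < (wbar + wbar * σ / (σ - 1)) / (μ * wbar / (σ - 1) + Ybar / lbar) ∧
    ∀ Z ∈ Set.Ioo (0 : ℝ) 1,
      0 < σ - μ * Z ∧
      (0 < -(v * μ * Gbar ^ (-μ)) *
          (wbar * Z / (1 - σ) + ((Ybar / lbar) * Z ^ 2 - wbar * Z) / (σ - μ * Z)) ↔
        Z < (wbar + wbar * σ / (σ - 1)) / (μ * wbar / (σ - 1) + Ybar / lbar)) ∧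
      (-(v * μ * Gbar ^ (-μ)) *
          (wbar * Z / (1 - σ) + ((Ybar / lbar) * Z ^ 2 - wbar * Z) / (σ - μ * Z)) < 0 ↔
        (wbar + wbar * σ / (σ - 1)) / (μ * wbar / (σ - 1) + Ybar / lbar) < Z) := by
  obtain ⟨hμ0, hμ1⟩ := hμ
  have hσ1 : 0 < σ - 1 := by linarith
  set N : ℝ := wbar * (σ - 1) + wbar * σ with hN
  set D : ℝ := μ * wbar + (σ - 1) * (Ybar / lbar) with hD
  have hYl : 0 < Ybar / lbar := div_pos hY hl
  have hNpos : 0 < N := by positivity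
  have hDpos : 0 < D := by positivity
  have hZstar : (wbar + wbar * σ / (σ - 1)) / (μ * wbar / (σ - 1) + Ybar / lbar) = N / D := by
    rw [hN, hD]
    rw [div_eq_div_iff (by positivity) (by positivity)]
    field_simp
    try ring
    try exact Or.inl trivial
  have hC : 0 < v * μ * Gbar ^ (-μ) := by positivity
  refine ⟨by rw [hZstar]; positivity, ?_⟩
  rintro Z ⟨hZ0, hZ1⟩
  have hden : 0 < σ - μ * Z := by nlinarith
  have hK : 0 < (σ - 1) * (σ - μ * Z) := mul_pos hσ1 hden
  set A : ℝ := wbar * Z / (1 - σ) + ((Ybar / lbar) * Z ^ 2 - wbar * Z) / (σ - μ * Z) with hA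
  have h1σ : (1 : ℝ) - σ ≠ 0 := by intro h; linarith
  have hAeq : A = Z * (D * Z - N) / ((σ - 1) * (σ - μ * Z)) := by
    rw [eq_div_iff hK.ne', hA, hN, hD]
    field_simp [hden.ne', (by rw [mul_comm]; exact hden.ne' : σ - Z * μ ≠ 0)]
    ring
  have hAneg : A < 0 ↔ Z < N / D := by
    rw [hAeq, div_lt_iff₀ hK, zero_mul, lt_div_iff₀ hDpos]
    constructor
    · intro h; nlinarith
    · intro h; nlinarith
  have hApos : 0 < A ↔ N / D < Z := by
    rw [hAeq, lt_div_iff₀ hK, zero_mul, div_lt_iff₀ hDpos]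
    constructor
    · intro h; nlinarith
    · intro h; nlinarith
  refine ⟨hden, ?_, ?_⟩
  · rw [hZstar, ← hAneg, neg_mul, neg_pos, ← neg_pos, ← mul_neg,
      mul_pos_iff_of_pos_left hC, neg_pos]
  · rw [hZstar, ← hApos, neg_mul, neg_lt_zero, mul_pos_iff_of_pos_left hC]
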